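/- If a topological group G is extremely amenable, then every nontrivial G-Boolean algebra admits a G-invariant prime ideal. -/

import Mathlib

universe u v

/-- A topological group is extremely amenable if every continuous action of it on a
nonempty compact Hausdorff space has a fixed point. -/
def ExtremelyAmenable (G : Type u) [Group G] [TopologicalSpace G] : Prop :=
  ∀ (X : Type v) [TopologicalSpace X] [CompactSpace X] [T2Space X] [Nonempty X]
    [MulAction G X], Continuous (fun p : G × X => p.1 • p.2) →
    ∃ x : X, ∀ g : G, g • x = x

/-- Existence of a Boolean homomorphism to `Bool` for a nontrivial Boolean algebra. -/
lemma exists_bool_hom {B : Type v} [BooleanAlgebra B] (hnt : (⊥ : B) ≠ ⊤) :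
    ∃ x : B → Bool, (∀ a b : B, x (a ⊓ b) = (x a && x b)) ∧ ∀ a : B, x aᶜ = !x a := by
  classical
  obtain ⟨J, hJ, -, -⟩ := DistribLattice.prime_ideal_of_disjoint_filter_ideal
    (F := Order.PFilter.principal (⊤ : B)) (I := Order.Ideal.principal (⊥ : B))
    (by
      rw [Set.disjoint_left]
      intro a ha ha'
      have h1 : (⊤ : B) ≤ a := Order.PFilter.mem_principal.mp ha
      have h2 : a ≤ (⊥ : B) := Order.Ideal.mem_principal.mp ha'
      exact hnt (le_antisymm bot_le (le_trans h1 h2)))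
  have hproper : (⊤ : B) ∉ J := hJ.toIsProper.top_notMem
  have hcompl_iff : ∀ a : B, aᶜ ∈ J ↔ a ∉ J := by
    intro a
    constructor
    · intro h h'
      exact hproper (by simpa using Order.Ideal.sup_mem h' h)
    · exact hJ.compl_mem_of_notMem
  have hinf_iff : ∀ a b : B, a ⊓ b ∈ J ↔ a ∈ J ∨ b ∈ J := by
    intro a b
    constructor
    · exact hJ.mem_or_mem
    · rintro (h | h)
      · exact J.lower inf_le_left h
      · exact J.lower inf_le_right h
  refine ⟨fun b => !decide (b ∈ J), fun a b => ?_, fun a => ?_⟩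
  · by_cases ha : a ∈ J <;> by_cases hb : b ∈ J <;>
      simp [ha, hb, hinf_iff a b]
  · by_cases ha : a ∈ J <;> simp [ha, hcompl_iff a]

theorem stmt_13 {G : Type u} {B : Type v}
    [Group G] [TopologicalSpace G] [IsTopologicalGroup G]
    (hEA : ExtremelyAmenable.{u, v} G)
    [BooleanAlgebra B] [MulAction G B]
    (hinf : ∀ (g : G) (a b : B), g • (a ⊓ b) = g • a ⊓ g • b)
    (hcompl : ∀ (g : G) (a : B), g • aᶜ = (g • a)ᶜ)
    (hstab : ∀ b : B, IsOpen {g : G | g • b = b})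
    (hnt : (⊥ : B) ≠ ⊤) :
    ∃ I : Set B, (∀ a b : B, a ≤ b → b ∈ I → a ∈ I) ∧
      (∀ a b : B, a ∈ I → b ∈ I → a ⊔ b ∈ I) ∧ I ≠ Set.univ ∧
      (∀ b : B, b ∈ I ∨ bᶜ ∈ I) ∧ (∀ (g : G) (b : B), b ∈ I ↔ g • b ∈ I) := by
  classical
  -- The Stone space of `B`.
  let X : Type v := {x : B → Bool //
    (∀ a b : B, x (a ⊓ b) = (x a && x b)) ∧ ∀ a : B, x aᶜ = !x a}
  haveI : Nonempty X := by
    obtain ⟨x, h1, h2⟩ := exists_bool_hom hnt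
    exact ⟨⟨x, h1, h2⟩⟩
  haveI : CompactSpace X := by
    have heq : {x : B → Bool |
        (∀ a b : B, x (a ⊓ b) = (x a && x b)) ∧ ∀ a : B, x aᶜ = !x a} =
        (⋂ (a : B) (b : B), {x : B → Bool | x (a ⊓ b) = (x a && x b)}) ∩
          ⋂ (a : B), {x : B → Bool | x aᶜ = !x a} := by
      ext x; simp [Set.mem_iInter]
    have hcl : IsClosed {x : B → Bool |
        (∀ a b : B, x (a ⊓ b) = (x a && x b)) ∧ ∀ a : B, x aᶜ = !x a} := by
      rw [heq]
      have hand : ∀ a b : B, Continuous (fun x : B → Bool => x a && x b) := by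
        intro a b
        have he : (fun x : B → Bool => x a && x b) =
            (fun p : Bool × Bool => p.1 && p.2) ∘ fun x : B → Bool => (x a, x b) := rfl
        rw [he]
        exact continuous_of_discreteTopology.comp
          ((continuous_apply a).prodMk (continuous_apply b))
      have hnot : ∀ a : B, Continuous (fun x : B → Bool => !x a) := by
        intro a
        have he : (fun x : B → Bool => !x a) = (fun c : Bool => !c) ∘ fun x : B → Bool => x a :=
          rfl
        rw [he]
        exact continuous_of_discreteTopology.comp (continuous_apply a)
      exact IsClosed.inter
        (isClosed_iInter fun a => isClosed_iInter fun b =>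
          isClosed_eq (continuous_apply _) (hand a b))
        (isClosed_iInter fun a => isClosed_eq (continuous_apply _) (hnot a))
    exact isCompact_iff_compactSpace.mp hcl.isCompact
  -- the action
  letI : MulAction G X :=
    { smul := fun g x => ⟨fun b => x.1 (g⁻¹ • b), by
        refine ⟨fun a b => ?_, fun a => ?_⟩
        · show x.1 (g⁻¹ • (a ⊓ b)) = (x.1 (g⁻¹ • a) && x.1 (g⁻¹ • b))
          rw [hinf g⁻¹ a b]
          exact x.2.1 _ _
        · show x.1 (g⁻¹ • aᶜ) = !x.1 (g⁻¹ • a)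
          rw [hcompl g⁻¹ a]
          exact x.2.2 _⟩
      one_smul := fun x => Subtype.ext (funext fun b => by
        show x.1 ((1 : G)⁻¹ • b) = x.1 b
        rw [inv_one, one_smul])
      mul_smul := fun g h x => Subtype.ext (funext fun b => by
        show x.1 ((g * h)⁻¹ • b) = x.1 (h⁻¹ • g⁻¹ • b)
        rw [mul_inv_rev, mul_smul]) }
  have hsmul_def : ∀ (g : G) (x : X) (b : B), (g • x).1 b = x.1 (g⁻¹ • b) := fun _ _ _ => rfl
  -- continuity
  have hcont : Continuous (fun p : G × X => p.1 • p.2) := by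
    have key : Continuous (fun p : G × X => (fun b => p.2.1 (p.1⁻¹ • b) : B → Bool)) := by
      apply continuous_pi
      intro b
      rw [continuous_iff_continuousAt]
      rintro ⟨g₀, x₀⟩
      have hV : IsOpen {g : G | g⁻¹ • b = g₀⁻¹ • b} := by
        have h2 := (hstab (g₀⁻¹ • b)).preimage (continuous_mul_left g₀⁻¹)
        have h1 : {g : G | g⁻¹ • b = g₀⁻¹ • b} =
            (fun g => g₀⁻¹ * g) ⁻¹' {h : G | h • (g₀⁻¹ • b) = g₀⁻¹ • b} := by
          ext g
          simp only [Set.mem_preimage, Set.mem_setOf_eq, mul_smul]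
          constructor
          · intro h
            rw [← h, smul_inv_smul]
            exact h.symm
          · intro h
            have h3 : g • g₀⁻¹ • b = b := smul_left_cancel g₀⁻¹ h
            have h4 := congrArg (fun c => g⁻¹ • c) h3
            simpa using h4.symm
        rw [h1]
        exact h2
      have hU : IsOpen {p : G × X | p.1⁻¹ • b = g₀⁻¹ • b} := hV.preimage continuous_fst
      have hmem : (⟨g₀, x₀⟩ : G × X) ∈ {p : G × X | p.1⁻¹ • b = g₀⁻¹ • b} := rfl
      have hg : Continuous (fun p : G × X => p.2.1 (g₀⁻¹ • b)) :=
        (continuous_apply _).comp (continuous_subtype_val.comp continuous_snd)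
      apply hg.continuousAt.congr
      filter_upwards [hU.mem_nhds hmem] with p hp
      show p.2.1 (g₀⁻¹ • b) = p.2.1 (p.1⁻¹ • b)
      rw [hp]
    exact key.subtype_mk _
  obtain ⟨x, hx⟩ := hEA X hcont
  have hfix : ∀ (g : G) (b : B), x.1 (g • b) = x.1 b := by
    intro g b
    have h := congrArg (fun y : X => y.1 (g • b)) (hx g)
    rw [hsmul_def, inv_smul_smul] at h
    exact h.symm
  have hbot : x.1 ⊥ = false := by
    have h := x.2.1 ⊥ ⊥ᶜ
    rw [inf_compl_eq_bot, x.2.2] at h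
    cases hh : x.1 ⊥ <;> simp [hh] at h ⊢
  have htop : x.1 ⊤ = true := by
    have h := x.2.2 ⊥
    rw [compl_bot, hbot] at h
    simpa using h
  refine ⟨{b : B | x.1 b = false}, ?_, ?_, ?_, ?_, ?_⟩
  · intro a b hab hb
    have h := x.2.1 a b
    rw [inf_eq_left.mpr hab] at h
    simp only [Set.mem_setOf_eq] at hb ⊢
    rw [h, hb, Bool.and_false]
  · intro a b ha hb
    simp only [Set.mem_setOf_eq] at ha hb ⊢
    have h1 : a ⊔ b = (aᶜ ⊓ bᶜ)ᶜ := by rw [compl_inf, compl_compl, compl_compl]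
    rw [h1, x.2.2, x.2.1, x.2.2, x.2.2, ha, hb]
    rfl
  · intro h
    have h2 : (⊤ : B) ∈ {b : B | x.1 b = false} := h ▸ Set.mem_univ ⊤
    rw [Set.mem_setOf_eq, htop] at h2
    exact Bool.noConfusion h2
  · intro b
    rcases h : x.1 b with _ | _
    · exact Or.inl h
    · refine Or.inr ?_
      show x.1 bᶜ = false
      rw [x.2.2, h]
      rfl
  · intro g b
    simp only [Set.mem_setOf_eq, hfix g b]
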